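/- Let A be an n×n complex matrix and suppose one Geršgorin disc D_i is disjoint from the union of all other Geršgorin discs D_j, j≠i. Then D_i contains exactly one eigenvalue of A (counted with algebraic multiplicity). -/

import Mathlib

open Polynomial Matrix Finset Filter Topology

namespace GershAux

variable {n : ℕ}

noncomputable def R (A : Matrix (Fin n) (Fin n) ℂ) (k : Fin n) : ℝ :=
  ∑ j ∈ Finset.univ.erase k, ‖A k j‖

lemma R_nonneg (A : Matrix (Fin n) (Fin n) ℂ) (k : Fin n) : 0 ≤ R A k :=
  Finset.sum_nonneg fun _ _ => norm_nonneg _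

/-- polynomial-entry matrix interpolating between diag A and A -/
noncomputable def Mp (A : Matrix (Fin n) (Fin n) ℂ) : Matrix (Fin n) (Fin n) (Polynomial ℂ) :=
  Matrix.of fun k l => if k = l then C (A k k) else C (A k l) * X

noncomputable def Af (A : Matrix (Fin n) (Fin n) ℂ) (t : ℝ) : Matrix (Fin n) (Fin n) ℂ :=
  (Mp A).map (evalRingHom (t : ℂ))

lemma Af_apply (A : Matrix (Fin n) (Fin n) ℂ) (t : ℝ) (k l : Fin n) :
    Af A t k l = if k = l then A k k else (t : ℂ) * A k l := by
  by_cases h : k = l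
  · simp only [Af, Mp, Matrix.map_apply, Matrix.of_apply, if_pos h, eval_C, coe_evalRingHom]
  · simp only [Af, Mp, Matrix.map_apply, Matrix.of_apply, if_neg h, coe_evalRingHom, eval_mul,
      eval_C, eval_X, mul_comm]

lemma Af_one (A : Matrix (Fin n) (Fin n) ℂ) : Af A 1 = A := by
  ext k l; rw [Af_apply]; by_cases h : k = l <;> simp [h]

lemma Af_zero (A : Matrix (Fin n) (Fin n) ℂ) :
    Af A 0 = Matrix.diagonal (fun k => A k k) := by
  ext k l; rw [Af_apply]; by_cases h : k = l <;> simp [h, Matrix.diagonal_apply, Matrix.diagonal_apply_ne]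

lemma contCoeff (A : Matrix (Fin n) (Fin n) ℂ) (k : ℕ) :
    Continuous fun t : ℝ => ((Af A t).charpoly).coeff k := by
  have h : ∀ t : ℝ, ((Af A t).charpoly).coeff k
      = Polynomial.eval (t : ℂ) ((Mp A).charpoly.coeff k) := by
    intro t
    rw [Af, Matrix.charpoly_map, Polynomial.coeff_map]
    rfl
  simp only [h]
  exact ((Mp A).charpoly.coeff k).continuous.comp Complex.continuous_ofReal

lemma hasEigen_of_root (B : Matrix (Fin n) (Fin n) ℂ) {z : ℂ} (h : B.charpoly.IsRoot z) :
    Module.End.HasEigenvalue (Matrix.toLin' B) z := by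
  have h1 : Polynomial.eval z B.charpoly = ((charmatrix B).map (evalRingHom z)).det := by
    rw [Matrix.charpoly,
      show eval z B.charmatrix.det = evalRingHom z B.charmatrix.det from rfl,
      RingHom.map_det, RingHom.mapMatrix_apply]
  have h2 : (charmatrix B).map (evalRingHom z) = z • 1 - B := by
    ext k l
    by_cases hkl : k = l
    · subst hkl
      simp [charmatrix_apply_eq, Matrix.one_apply]
    · simp [charmatrix_apply_ne _ _ _ hkl, Matrix.one_apply, hkl]
  have h0 : (z • (1 : Matrix (Fin n) (Fin n) ℂ) - B).det = 0 := by
    rw [← h2, ← h1]; exact h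
  have hdet : (B - z • (1 : Matrix (Fin n) (Fin n) ℂ)).det = 0 := by
    rw [show B - z • (1 : Matrix (Fin n) (Fin n) ℂ) = -(z • 1 - B) from (neg_sub _ _).symm,
      Matrix.det_neg, h0, mul_zero]
  have hdet' : LinearMap.det (Matrix.toLin' (B - z • 1)) = 0 := by
    rw [LinearMap.det_toLin']; exact hdet
  have hk := LinearMap.bot_lt_ker_of_det_eq_zero hdet'
  rw [Module.End.hasEigenvalue_iff, Module.End.eigenspace_def]
  have hEq : Matrix.toLin' (B - z • 1) = Matrix.toLin' B - z • 1 := by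
    rw [map_sub, _root_.map_smul, Matrix.toLin'_one]
    rfl
  rw [← hEq]
  exact (bot_lt_iff_ne_bot.mp hk)

lemma root_mem (A : Matrix (Fin n) (Fin n) ℂ) {t : ℝ} (ht : t ∈ Set.Icc (0:ℝ) 1) {z : ℂ}
    (hz : ((Af A t).charpoly).IsRoot z) : ∃ k, ‖z - A k k‖ ≤ R A k := by
  obtain ⟨k, hk⟩ := eigenvalue_mem_ball (hasEigen_of_root _ hz)
  refine ⟨k, ?_⟩
  rw [Metric.mem_closedBall, Complex.dist_eq] at hk
  have hdiag : Af A t k k = A k k := by rw [Af_apply]; simp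
  rw [hdiag] at hk
  refine hk.trans (Finset.sum_le_sum fun j hj => ?_)
  have hjk : k ≠ j := fun h => (Finset.mem_erase.mp hj).1 h.symm
  rw [Af_apply, if_neg hjk, norm_mul]
  have : ‖(t : ℂ)‖ ≤ 1 := by
    rw [Complex.norm_real, Real.norm_eq_abs, abs_of_nonneg ht.1]; exact ht.2
  calc ‖(t:ℂ)‖ * ‖A k j‖ ≤ 1 * ‖A k j‖ :=
        mul_le_mul_of_nonneg_right this (norm_nonneg _)
    _ = ‖A k j‖ := one_mul _


lemma cont_coeff_prod (s : Finset (Fin n)) (k : ℕ) :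
    Continuous fun w : Fin n → ℂ => (∏ j ∈ s, (X - C (w j))).coeff k := by
  induction s using Finset.induction generalizing k with
  | empty => simpa using continuous_const
  | insert a s ha ih =>
    have hexp : ∀ w : Fin n → ℂ,
        (∏ j ∈ insert a s, (X - C (w j))) = X * (∏ j ∈ s, (X - C (w j)))
          - C (w a) * (∏ j ∈ s, (X - C (w j))) := by
      intro w
      rw [Finset.prod_insert ha, sub_mul]
    simp only [hexp, coeff_sub, coeff_C_mul]
    cases k with
    | zero =>
      simp only [mul_coeff_zero, coeff_X_zero, zero_mul]
      exact (continuous_const.sub (((continuous_apply a)).mul (ih 0)))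
    | succ m =>
      simp only [coeff_X_mul]
      exact (ih m).sub (((continuous_apply a)).mul (ih (m+1)))

lemma multiset_to_tuple {α : Type*} {s : Multiset α} (h : Multiset.card s = n) :
    ∃ f : Fin n → α, s = Multiset.map f Finset.univ.val := by
  have hl : s.toList.length = n := by rw [Multiset.length_toList, h]
  subst hl
  refine ⟨s.toList.get, ?_⟩
  have h2 : (Finset.univ.val : Multiset (Fin s.toList.length)) = ((List.finRange s.toList.length : List (Fin s.toList.length)) : Multiset (Fin s.toList.length)) := by
    simp [Finset.univ, Fintype.elems, Fin.fintype, List.finRange]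
  rw [h2, Multiset.map_coe, List.map_get_finRange, Multiset.coe_toList]

lemma prod_tuple_roots (f : Fin n → ℂ) :
    (∏ j, (X - C (f j))).roots = Multiset.map f Finset.univ.val := by
  have : (∏ j, (X - C (f j))) = ((Multiset.map f Finset.univ.val).map fun a => X - C a).prod := by
    rw [Multiset.map_map]
    rfl
  rw [this, roots_multiset_prod_X_sub_C]

lemma exists_tuple (p : Polynomial ℂ) (hm : p.Monic) (hd : p.natDegree = n) :
    ∃ f : Fin n → ℂ, p = ∏ j, (X - C (f j)) := by
  have hs : p.Splits := IsAlgClosed.splits p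
  have hc : Multiset.card p.roots = n := by
    rw [(Polynomial.splits_iff_card_roots).mp hs, hd]
  obtain ⟨f, hf⟩ := multiset_to_tuple hc
  refine ⟨f, ?_⟩
  have := hs.eq_prod_roots_of_monic hm
  rw [this, hf, Multiset.map_map]
  rfl

lemma count_roots_tuple (P : ℂ → Prop) [DecidablePred P] (f : Fin n → ℂ) :
    Multiset.card ((∏ j, (X - C (f j))).roots.filter P)
      = (Finset.univ.filter fun j => P (f j)).card := by
  rw [prod_tuple_roots, ← Multiset.countP_eq_card_filter, Multiset.countP_map]
  rfl


def S1 (A : Matrix (Fin n) (Fin n) ℂ) (i : Fin n) : Set ℂ :=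
  {z : ℂ | ‖z - A i i‖ ≤ R A i}

def S2 (A : Matrix (Fin n) (Fin n) ℂ) (i : Fin n) : Set ℂ :=
  {z : ℂ | ∃ k, k ≠ i ∧ ‖z - A k k‖ ≤ R A k}

lemma abs_sub_cont (c : ℂ) : Continuous fun z : ℂ => ‖z - c‖ :=
  continuous_norm.comp (continuous_id.sub continuous_const)

lemma S1_closed (A : Matrix (Fin n) (Fin n) ℂ) (i : Fin n) : IsClosed (S1 A i) :=
  isClosed_le (abs_sub_cont _) continuous_const

lemma S2_closed (A : Matrix (Fin n) (Fin n) ℂ) (i : Fin n) : IsClosed (S2 A i) := by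
  have : S2 A i = ⋃ k : Fin n, {z : ℂ | k ≠ i ∧ ‖z - A k k‖ ≤ R A k} := by
    ext z; simp [S2, Set.mem_iUnion]
  rw [this]
  refine isClosed_iUnion_of_finite fun k => ?_
  by_cases hk : k = i
  · simp [hk]
  · have : {z : ℂ | k ≠ i ∧ ‖z - A k k‖ ≤ R A k}
        = {z : ℂ | ‖z - A k k‖ ≤ R A k} := by
      ext z; simp [hk]
    rw [this]
    exact isClosed_le (abs_sub_cont _) continuous_const

lemma U_compact (A : Matrix (Fin n) (Fin n) ℂ) (i : Fin n) : IsCompact (S1 A i ∪ S2 A i) := by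
  have : S1 A i ∪ S2 A i = ⋃ k : Fin n, Metric.closedBall (A k k) (R A k) := by
    ext z
    simp only [S1, S2, Set.mem_union, Set.mem_setOf_eq, Set.mem_iUnion, Metric.mem_closedBall,
      Complex.dist_eq]
    constructor
    · rintro (h | ⟨k, _, h⟩)
      exacts [⟨i, h⟩, ⟨k, h⟩]
    · rintro ⟨k, h⟩
      by_cases hk : k = i
      · subst hk; exact Or.inl h
      · exact Or.inr ⟨k, hk, h⟩
  rw [this]
  exact isCompact_iUnion fun k => isCompact_closedBall _ _


/-- The number of roots of the charpoly of `Af A t` lying in the `i`-th disc. -/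
noncomputable def N (A : Matrix (Fin n) (Fin n) ℂ) (i : Fin n) (t : ℝ) : ℕ :=
  Multiset.card (((Af A t).charpoly).roots.filter
    fun z => ‖z - A i i‖ ≤ R A i)

lemma eventually_N (A : Matrix (Fin n) (Fin n) ℂ) (i : Fin n)
    (hdisj : ∀ z : ℂ, ‖z - A i i‖ ≤ R A i →
      ∀ k : Fin n, k ≠ i → ¬ (‖z - A k k‖ ≤ R A k))
    {t : ℝ} (ht : t ∈ Set.Icc (0:ℝ) 1) :
    ∀ᶠ s in 𝓝[Set.Icc (0:ℝ) 1] t, N A i s = N A i t := by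
  rw [Filter.eventually_iff_seq_eventually]
  intro u hu
  by_contra hc
  rw [Filter.not_eventually] at hc
  have hIcc : ∀ᶠ m in Filter.atTop, u m ∈ Set.Icc (0:ℝ) 1 :=
    hu.eventually eventually_mem_nhdsWithin
  obtain ⟨φ, hφm, hφ⟩ := Filter.extraction_of_frequently_atTop (hc.and_eventually hIcc)
  have hdeg : ∀ s : ℝ, ((Af A s).charpoly).natDegree = n := fun s => by
    simpa using Matrix.charpoly_natDegree_eq_dim (Af A s)
  choose z hz using fun m =>
    exists_tuple ((Af A (u (φ m))).charpoly) (Matrix.charpoly_monic _) (hdeg _)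
  have hzU : ∀ m, (z m) ∈ Set.univ.pi (fun _ : Fin n => S1 A i ∪ S2 A i) := by
    intro m
    intro j _
    have hroot : ((Af A (u (φ m))).charpoly).IsRoot (z m j) := by
      have : z m j ∈ ((Af A (u (φ m))).charpoly).roots := by
        rw [hz m, prod_tuple_roots]
        exact Multiset.mem_map.mpr ⟨j, by simp, rfl⟩
      exact Polynomial.isRoot_of_mem_roots this
    obtain ⟨k, hk⟩ := root_mem A (hφ m).2 hroot
    by_cases hki : k = i
    · subst hki; exact Or.inl hk
    · exact Or.inr ⟨k, hki, hk⟩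
  have hC : IsCompact (Set.univ.pi (fun _ : Fin n => S1 A i ∪ S2 A i)) :=
    isCompact_univ_pi fun _ => U_compact A i
  obtain ⟨w, hwU, φ', hφ'm, hw⟩ := hC.tendsto_subseq hzU
  have hst : Tendsto (fun m => u (φ (φ' m))) atTop (𝓝 t) :=
    (hu.comp ((hφm.comp hφ'm).tendsto_atTop)).mono_right nhdsWithin_le_nhds
  have hplim : (∏ j, (X - C (w j))) = (Af A t).charpoly := by
    apply Polynomial.ext
    intro k
    have h1 : Tendsto (fun m => ((Af A (u (φ (φ' m)))).charpoly).coeff k) atTop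
        (𝓝 (((Af A t).charpoly).coeff k)) := ((contCoeff A k).tendsto t).comp hst
    have h2 : Tendsto (fun m => (∏ j, (X - C (z (φ' m) j))).coeff k) atTop
        (𝓝 ((∏ j, (X - C (w j))).coeff k)) :=
      ((cont_coeff_prod Finset.univ k).tendsto w).comp hw
    have heq : (fun m => (∏ j, (X - C (z (φ' m) j))).coeff k)
        = fun m => ((Af A (u (φ (φ' m)))).charpoly).coeff k :=
      funext fun m => by rw [← hz (φ' m)]
    rw [heq] at h2
    exact tendsto_nhds_unique h2 h1
  have hNt : N A i t = (Finset.univ.filter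
      fun j => ‖w j - A i i‖ ≤ R A i).card := by
    rw [N, ← hplim, count_roots_tuple]
  have hNm : ∀ m, N A i (u (φ (φ' m))) = (Finset.univ.filter
      fun j => ‖z (φ' m) j - A i i‖ ≤ R A i).card := by
    intro m
    rw [N, hz (φ' m), count_roots_tuple]
  have hiff : ∀ j, ∀ᶠ m in atTop,
      ((‖z (φ' m) j - A i i‖ ≤ R A i) ↔ (‖w j - A i i‖ ≤ R A i)) := by
    intro j
    have hzj : Tendsto (fun m => z (φ' m) j) atTop (𝓝 (w j)) :=
      ((continuous_apply j).tendsto w).comp hw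
    have hmem : ∀ m, z (φ' m) j ∈ S1 A i ∪ S2 A i := fun m => hzU (φ' m) j (Set.mem_univ _)
    have hwm : w j ∈ S1 A i ∪ S2 A i := hwU j (Set.mem_univ _)
    rcases hwm with h1 | h2
    · have hn2 : w j ∉ S2 A i := by
        rintro ⟨k, hk, hle⟩
        exact hdisj (w j) h1 k hk hle
      have hev : ∀ᶠ m in atTop, z (φ' m) j ∈ (S2 A i)ᶜ :=
        hzj.eventually ((S2_closed A i).isOpen_compl.eventually_mem hn2)
      filter_upwards [hev] with m hm
      exact iff_of_true ((hmem m).resolve_right hm) h1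
    · have hn1 : w j ∉ S1 A i := by
        intro hc1
        obtain ⟨k, hk, hle⟩ := h2
        exact hdisj (w j) hc1 k hk hle
      have hev : ∀ᶠ m in atTop, z (φ' m) j ∈ (S1 A i)ᶜ :=
        hzj.eventually ((S1_closed A i).isOpen_compl.eventually_mem hn1)
      filter_upwards [hev] with m hm
      exact iff_of_false hm hn1
  have hall : ∀ᶠ m in atTop, ∀ j : Fin n,
      ((‖z (φ' m) j - A i i‖ ≤ R A i) ↔ (‖w j - A i i‖ ≤ R A i)) :=
    eventually_all.mpr hiff
  obtain ⟨m, hm⟩ := hall.exists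
  refine (hφ (φ' m)).1 ?_
  rw [hNm m, hNt]
  congr 1
  exact Finset.filter_congr fun j _ => hm j


lemma charpoly_diag (d : Fin n → ℂ) :
    (Matrix.diagonal d).charpoly = ∏ k, (X - C (d k)) := by
  have h : charmatrix (Matrix.diagonal d)
      = Matrix.diagonal (fun k => (X : ℂ[X]) - C (d k)) := by
    ext k l
    by_cases hkl : k = l
    · subst hkl; simp [charmatrix_apply_eq]
    · rw [charmatrix_apply_ne _ _ _ hkl, Matrix.diagonal_apply_ne _ hkl,
        Matrix.diagonal_apply_ne _ hkl, map_zero, neg_zero]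
  rw [Matrix.charpoly, h, Matrix.det_diagonal]

lemma N_zero (A : Matrix (Fin n) (Fin n) ℂ) (i : Fin n)
    (hdisj : ∀ z : ℂ, ‖z - A i i‖ ≤ R A i →
      ∀ k : Fin n, k ≠ i → ¬ (‖z - A k k‖ ≤ R A k)) :
    N A i 0 = 1 := by
  rw [N, Af_zero, charpoly_diag, count_roots_tuple]
  have h : (Finset.univ.filter fun k => ‖A k k - A i i‖ ≤ R A i) = {i} := by
    ext k
    simp only [Finset.mem_filter, Finset.mem_univ, true_and, Finset.mem_singleton]
    constructor
    · intro hk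
      by_contra hne
      exact hdisj (A k k) hk k hne (by simpa using R_nonneg A k)
    · rintro rfl
      simpa using R_nonneg A _
  rw [h, Finset.card_singleton]

theorem main {n : ℕ} (A : Matrix (Fin n) (Fin n) ℂ)
    (i : Fin n)
    (hdisj : ∀ z : ℂ, ‖z - A i i‖ ≤ ∑ j ∈ Finset.univ \ {i}, ‖A i j‖ →
      ∀ k : Fin n, k ≠ i →
        ¬ (‖z - A k k‖ ≤ ∑ j ∈ Finset.univ \ {k}, ‖A k j‖)) :
    (A.charpoly.roots.filter
      (fun z => ‖z - A i i‖ ≤ ∑ j ∈ Finset.univ \ {i}, ‖A i j‖)).card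
      = 1 := by
  have hR : ∀ k : Fin n, (∑ j ∈ Finset.univ \ {k}, ‖A k j‖) = R A k := fun k => by
    rw [R, Finset.erase_eq]
  have hdisj' : ∀ z : ℂ, ‖z - A i i‖ ≤ R A i →
      ∀ k : Fin n, k ≠ i → ¬ (‖z - A k k‖ ≤ R A k) := by
    intro z hz k hk hle
    exact hdisj z (by rw [hR]; exact hz) k hk (by rw [hR]; exact hle)
  have key : N A i 1 = N A i 0 := by
    have hco : ContinuousOn (N A i) (Set.Icc (0:ℝ) 1) := by
      intro t ht
      have hev := eventually_N A i hdisj' ht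
      exact tendsto_const_nhds.congr' (hev.mono fun s hs => hs.symm)
    have hpc := (isPreconnected_Icc (a := (0:ℝ)) (b := 1)).image (N A i) hco
    have h1 : N A i 1 ∈ (N A i) '' Set.Icc 0 1 := ⟨1, by norm_num, rfl⟩
    have h0 : N A i 0 ∈ (N A i) '' Set.Icc 0 1 := ⟨0, by norm_num, rfl⟩
    exact hpc.subsingleton h1 h0
  calc (A.charpoly.roots.filter
      (fun z => ‖z - A i i‖ ≤ ∑ j ∈ Finset.univ \ {i}, ‖A i j‖)).card
      = N A i 1 := by rw [N, Af_one, hR i]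
    _ = 1 := by rw [key, N_zero A i hdisj']

end GershAux

/-- If one Geršgorin disc of a complex matrix is disjoint from all the other discs,
then it contains exactly one eigenvalue, counted with algebraic multiplicity
(as a root of the characteristic polynomial). -/
theorem gershgorin_isolated_disc_unique_eigenvalue {n : ℕ} (A : Matrix (Fin n) (Fin n) ℂ)
    (i : Fin n)
    (hdisj : ∀ z : ℂ, ‖z - A i i‖ ≤ ∑ j ∈ Finset.univ \ {i}, ‖A i j‖ →
      ∀ k : Fin n, k ≠ i →
        ¬ (‖z - A k k‖ ≤ ∑ j ∈ Finset.univ \ {k}, ‖A k j‖)) :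
    (A.charpoly.roots.filter
      (fun z => ‖z - A i i‖ ≤ ∑ j ∈ Finset.univ \ {i}, ‖A i j‖)).card
      = 1 :=
  GershAux.main A i hdisj
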